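/- For every graph G, GA₁(G) ≥ δ·M₁(G)/(2Δ²), with equality if and only if G is regular. -/

import Mathlib

open Finset Real

variable {V : Type*}

noncomputable def edgeSum (G : SimpleGraph V) [Fintype V] [DecidableRel G.Adj]
    (f : ℝ → ℝ → ℝ) (hf : ∀ a b, f a b = f b a) : ℝ :=
  ∑ e ∈ G.edgeFinset,
    Sym2.lift ⟨fun u v => f (G.degree u) (G.degree v), fun u v => hf _ _⟩ e

noncomputable def GA1 (G : SimpleGraph V) [Fintype V] [DecidableRel G.Adj] : ℝ :=
  edgeSum G (fun x y => 2 * Real.sqrt (x * y) / (x + y))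
    (fun a b => by (try dsimp only); rw [mul_comm a b, add_comm a b])

noncomputable def M1 (G : SimpleGraph V) [Fintype V] [DecidableRel G.Adj] : ℝ :=
  ∑ u : V, (G.degree u : ℝ) ^ 2

noncomputable def M2 (G : SimpleGraph V) [Fintype V] [DecidableRel G.Adj] : ℝ :=
  edgeSum G (fun x y => x * y) (fun a b => mul_comm a b)

noncomputable def randic (G : SimpleGraph V) [Fintype V] [DecidableRel G.Adj] : ℝ :=
  edgeSum G (fun x y => 1 / Real.sqrt (x * y)) (fun a b => by (try dsimp only); rw [mul_comm a b])

noncomputable def genRandic (G : SimpleGraph V) [Fintype V] [DecidableRel G.Adj] (α : ℝ) : ℝ :=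
  edgeSum G (fun x y => (x * y) ^ α) (fun a b => by (try dsimp only); rw [mul_comm a b])

noncomputable def modZagreb (G : SimpleGraph V) [Fintype V] [DecidableRel G.Adj] : ℝ :=
  edgeSum G (fun x y => 1 / (x * y)) (fun a b => by (try dsimp only); rw [mul_comm a b])

noncomputable def NKstar (G : SimpleGraph V) [Fintype V] [DecidableRel G.Adj] : ℝ :=
  ∏ e ∈ G.edgeFinset,
    Sym2.lift ⟨fun u v => ((G.degree u : ℝ) * (G.degree v : ℝ)), fun u v => mul_comm _ _⟩ e

def GraphRegular (G : SimpleGraph V) [Fintype V] [DecidableRel G.Adj] : Prop :=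
  ∃ k, G.IsRegularOfDegree k

lemma sum_lift_add (G : SimpleGraph V) [Fintype V] [DecidableRel G.Adj] [DecidableEq V]
    (F : V → ℝ) :
    ∑ e ∈ G.edgeFinset, Sym2.lift ⟨fun u v => F u + F v, fun u v => add_comm _ _⟩ e
      = ∑ v, (G.degree v : ℝ) * F v := by
  have h1 : ∑ d : G.Dart, F d.fst
      = ∑ e ∈ G.edgeFinset, Sym2.lift ⟨fun u v => F u + F v, fun u v => add_comm _ _⟩ e := by
    rw [← Finset.sum_fiberwise_of_maps_to (t := G.edgeFinset) (g := fun d : G.Dart => d.edge)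
      (fun d _ => by rw [SimpleGraph.mem_edgeFinset]; exact d.edge_mem)]
    refine Finset.sum_congr rfl ?_
    intro e he
    induction e with
    | _ u v =>
      rw [SimpleGraph.mem_edgeFinset] at he
      have hd : (Finset.univ.filter fun d : G.Dart => d.edge = s(u, v))
          = {(⟨(u, v), he⟩ : G.Dart), (⟨(u, v), he⟩ : G.Dart).symm} := by
        have := SimpleGraph.Dart.edge_fiber (⟨(u, v), he⟩ : G.Dart)
        exact this
      rw [hd, Finset.sum_pair (SimpleGraph.Dart.symm_ne _).symm]
      simp [SimpleGraph.Dart.symm]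
  have h2 : ∑ d : G.Dart, F d.fst = ∑ v, (G.degree v : ℝ) * F v := by
    rw [← Finset.sum_fiberwise_of_maps_to (t := Finset.univ) (g := fun d : G.Dart => d.fst)
      (fun d _ => Finset.mem_univ _)]
    refine Finset.sum_congr rfl fun v _ => ?_
    have : ∀ d ∈ Finset.univ.filter (fun d : G.Dart => d.fst = v), F d.fst = F v := by
      intro d hd
      rw [Finset.mem_filter] at hd
      rw [hd.2]
    rw [Finset.sum_congr rfl this, Finset.sum_const,
      ← SimpleGraph.dart_fst_fiber_card_eq_degree G v]
    simp [mul_comm, SimpleGraph.dartOfNeighborSet]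
  rw [← h1, h2]

lemma key_ineq {δ Δ x y : ℝ} (hδ : 0 < δ) (hxl : δ ≤ x) (hxu : x ≤ Δ) (hyl : δ ≤ y)
    (hyu : y ≤ Δ) :
    δ * (x + y) / (2 * Δ ^ 2) ≤ 2 * Real.sqrt (x * y) / (x + y) := by
  have hΔ : 0 < Δ := lt_of_lt_of_le hδ (hxl.trans hxu)
  have hx : 0 < x := lt_of_lt_of_le hδ hxl
  have hy : 0 < y := lt_of_lt_of_le hδ hyl
  have hs : δ ≤ Real.sqrt (x * y) := by
    rw [show δ = Real.sqrt (δ ^ 2) by rw [Real.sqrt_sq hδ.le]]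
    exact Real.sqrt_le_sqrt (by nlinarith)
  have hsum : x + y ≤ 2 * Δ := by linarith
  rw [div_le_div_iff₀ (by positivity) (by positivity)]
  nlinarith [mul_nonneg (mul_nonneg (sub_nonneg.mpr hsum) (by positivity : (0:ℝ) ≤ x + y)) hδ.le,
    mul_nonneg (mul_nonneg (sub_nonneg.mpr hsum) (by positivity : (0:ℝ) ≤ 2 * Δ)) hδ.le,
    mul_nonneg (sub_nonneg.mpr hs) (by positivity : (0:ℝ) ≤ 4 * Δ ^ 2)]

lemma key_eq {δ Δ x y : ℝ} (hδ : 0 < δ) (hxl : δ ≤ x) (hxu : x ≤ Δ) (hyl : δ ≤ y)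
    (hyu : y ≤ Δ) (heq : 2 * Real.sqrt (x * y) / (x + y) = δ * (x + y) / (2 * Δ ^ 2)) :
    δ = Δ := by
  have hΔ : 0 < Δ := lt_of_lt_of_le hδ (hxl.trans hxu)
  have hx : 0 < x := lt_of_lt_of_le hδ hxl
  have hy : 0 < y := lt_of_lt_of_le hδ hyl
  have hs : δ ≤ Real.sqrt (x * y) := by
    rw [show δ = Real.sqrt (δ ^ 2) by rw [Real.sqrt_sq hδ.le]]
    exact Real.sqrt_le_sqrt (by nlinarith)
  -- chain: δ*(x+y)/(2Δ²) ≤ δ/Δ ≤ 2√(xy)/(x+y)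
  have h1 : δ * (x + y) / (2 * Δ ^ 2) ≤ δ / Δ := by
    rw [div_le_div_iff₀ (by positivity) hΔ]
    nlinarith [mul_nonneg (mul_nonneg hδ.le hΔ.le)
      (sub_nonneg.mpr (show x + y ≤ 2 * Δ by linarith))]
  have h2 : δ / Δ ≤ 2 * Real.sqrt (x * y) / (x + y) := by
    rw [div_le_div_iff₀ hΔ (by positivity)]
    nlinarith [mul_nonneg hδ.le (sub_nonneg.mpr (show x + y ≤ 2 * Δ by linarith)),
      mul_nonneg (sub_nonneg.mpr hs) (by positivity : (0:ℝ) ≤ 2 * Δ)]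
  have e1 : δ * (x + y) / (2 * Δ ^ 2) = δ / Δ := le_antisymm h1 (heq ▸ h2)
  -- from e1 : x + y = 2Δ
  have hxy : x + y = 2 * Δ := by
    field_simp at e1
    nlinarith [mul_pos hδ hΔ, sq_nonneg (x + y - 2 * Δ), mul_pos (mul_pos hδ hΔ) hΔ]
  have hxΔ : x = Δ := by linarith
  have hyΔ : y = Δ := by linarith
  have e2 : δ / Δ = 2 * Real.sqrt (x * y) / (x + y) := by rw [heq, e1]
  rw [hxΔ, hyΔ, show Δ * Δ = Δ ^ 2 by ring, Real.sqrt_sq hΔ.le] at e2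
  field_simp at e2
  nlinarith

theorem stmt3 (G : SimpleGraph V) [Fintype V] [DecidableRel G.Adj]
    (hc : G.Connected) (hm : G.edgeFinset.Nonempty) :
    (G.minDegree : ℝ) * M1 G / (2 * (G.maxDegree : ℝ) ^ 2) ≤ GA1 G ∧
      (GA1 G = (G.minDegree : ℝ) * M1 G / (2 * (G.maxDegree : ℝ) ^ 2) ↔ GraphRegular G) := by
  classical
  obtain ⟨e0, he0⟩ := hm
  obtain ⟨a, b, hab⟩ : ∃ a b, G.Adj a b := by
    revert he0
    induction e0 with
    | _ a b => exact fun h => ⟨a, b, SimpleGraph.mem_edgeFinset.mp h⟩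
  haveI : Nonempty V := ⟨a⟩
  have hdeg : ∀ v, 0 < G.degree v := by
    intro v
    rw [SimpleGraph.degree_pos_iff_exists_adj]
    by_cases h : v = a
    · exact ⟨b, h ▸ hab⟩
    · obtain ⟨p⟩ := hc.preconnected v a
      exact ⟨p.getVert 1, p.adj_snd (SimpleGraph.Walk.not_nil_of_ne h)⟩
  have hδpos : 0 < G.minDegree := by
    obtain ⟨v, hv⟩ := G.exists_minimal_degree_vertex
    rw [hv]; exact hdeg v
  set δ : ℝ := (G.minDegree : ℝ) with hδdef
  set Δ : ℝ := (G.maxDegree : ℝ) with hΔdef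
  have hδ : 0 < δ := Nat.cast_pos.mpr hδpos
  have hΔ : 0 < Δ := lt_of_lt_of_le hδ
    (Nat.cast_le.mpr ((G.minDegree_le_degree a).trans (G.degree_le_maxDegree a)))
  have hlo : ∀ v, δ ≤ (G.degree v : ℝ) := fun v => Nat.cast_le.mpr (G.minDegree_le_degree v)
  have hhi : ∀ v, (G.degree v : ℝ) ≤ Δ := fun v => Nat.cast_le.mpr (G.degree_le_maxDegree v)
  -- the lower-bound sum
  have hM : δ * M1 G / (2 * Δ ^ 2)
      = ∑ e ∈ G.edgeFinset, Sym2.lift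
          ⟨fun u v => δ * ((G.degree u : ℝ) + (G.degree v : ℝ)) / (2 * Δ ^ 2),
            fun u v => by dsimp only; rw [add_comm ((G.degree u : ℝ))]⟩ e := by
    have h1 : M1 G = ∑ e ∈ G.edgeFinset, Sym2.lift
        ⟨fun u v => (G.degree u : ℝ) + (G.degree v : ℝ), fun u v => add_comm _ _⟩ e := by
      rw [sum_lift_add G (fun v => (G.degree v : ℝ))]
      simp [M1, sq]
    rw [h1, Finset.mul_sum, Finset.sum_div]
    refine Finset.sum_congr rfl fun e _ => ?_
    induction e with
    | _ u v => simp
  have hterm : ∀ e ∈ G.edgeFinset,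
      Sym2.lift ⟨fun u v => δ * ((G.degree u : ℝ) + (G.degree v : ℝ)) / (2 * Δ ^ 2),
        fun u v => by dsimp only; rw [add_comm ((G.degree u : ℝ))]⟩ e
      ≤ Sym2.lift ⟨fun u v => 2 * Real.sqrt ((G.degree u : ℝ) * (G.degree v : ℝ))
          / ((G.degree u : ℝ) + (G.degree v : ℝ)),
          fun u v => by dsimp only; rw [mul_comm ((G.degree u : ℝ)), add_comm ((G.degree u : ℝ))]⟩ e := by
    intro e he
    induction e with
    | _ u v =>
      simp only [Sym2.lift_mk]
      exact key_ineq hδ (hlo u) (hhi u) (hlo v) (hhi v)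
  have hGA : GA1 G = ∑ e ∈ G.edgeFinset,
      Sym2.lift ⟨fun u v => 2 * Real.sqrt ((G.degree u : ℝ) * (G.degree v : ℝ))
          / ((G.degree u : ℝ) + (G.degree v : ℝ)),
          fun u v => by dsimp only; rw [mul_comm ((G.degree u : ℝ)), add_comm ((G.degree u : ℝ))]⟩ e := rfl
  constructor
  · rw [hGA, hM]
    exact Finset.sum_le_sum hterm
  constructor
  · intro he
    rw [hGA, hM] at he
    have hall := (Finset.sum_eq_sum_iff_of_le hterm).mp he.symm
    have hedge : s(a, b) ∈ G.edgeFinset := SimpleGraph.mem_edgeFinset.mpr hab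
    have h1 := hall _ hedge
    simp only [Sym2.lift_mk] at h1
    have hδΔ : δ = Δ :=
      key_eq hδ (hlo a) (hhi a) (hlo b) (hhi b) h1.symm
    have hnat : G.minDegree = G.maxDegree := Nat.cast_injective hδΔ
    exact ⟨G.minDegree, fun v => le_antisymm
      (hnat ▸ G.degree_le_maxDegree v) (G.minDegree_le_degree v)⟩
  · rintro ⟨k, hk⟩
    have hkpos : 0 < k := hk a ▸ hdeg a
    have hmin : G.minDegree = k := le_antisymm (hk a ▸ G.minDegree_le_degree a)
      (G.le_minDegree_of_forall_le_degree k fun v => (hk v).ge)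
    have hmax : G.maxDegree = k := le_antisymm
      (G.maxDegree_le_of_forall_degree_le k fun v => (hk v).le)
      (hk a ▸ G.degree_le_maxDegree a)
    rw [hGA, hM]
    refine Finset.sum_congr rfl fun e _ => ?_
    induction e with
    | _ u v =>
      simp only [Sym2.lift_mk, hk u, hk v, hδdef, hΔdef, hmin, hmax]
      have hk' : (0:ℝ) < (k:ℝ) := by exact_mod_cast hkpos
      rw [show ((k:ℝ) * k) = (k:ℝ) ^ 2 by ring, Real.sqrt_sq hk'.le]
      field_simp
      ring
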